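/- For a bounded linear operator T on a complex Hilbert space, w(T) ≥ √(‖Im(T)‖² + m(Re(T))²), where m(S) = inf{|⟨Sx,x⟩| : ‖x‖ = 1}, Re(T) = (T+T*)/2 and Im(T) = (T−T*)/(2i). -/

import Mathlib

open Complex

variable {H : Type*} [NormedAddCommGroup H] [InnerProductSpace ℂ H] [CompleteSpace H]

/-- The numerical radius `w(T) = sup {|⟨Tx,x⟩| : ‖x‖ = 1}`. -/
noncomputable def numRadius (T : H →L[ℂ] H) : ℝ :=
  sSup {r : ℝ | ∃ x : H, ‖x‖ = 1 ∧ r = ‖(inner ℂ (T x) x : ℂ)‖}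

/-- The Crawford number `m(T) = inf {|⟨Tx,x⟩| : ‖x‖ = 1}`. -/
noncomputable def crawford (T : H →L[ℂ] H) : ℝ :=
  sInf {r : ℝ | ∃ x : H, ‖x‖ = 1 ∧ r = ‖(inner ℂ (T x) x : ℂ)‖}

/-- The real part `Re(T) = (T + T*)/2`. -/
noncomputable def reOp (T : H →L[ℂ] H) : H →L[ℂ] H := (2 : ℂ)⁻¹ • (T + star T)

/-- The imaginary part `Im(T) = (T - T*)/(2i)`. -/
noncomputable def imOp (T : H →L[ℂ] H) : H →L[ℂ] H := (2 * Complex.I)⁻¹ • (T - star T)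

lemma star_apply_inner' (T : H →L[ℂ] H) (x : H) :
    (inner ℂ ((star T) x) x : ℂ) = starRingEnd ℂ (inner ℂ (T x) x) := by
  rw [ContinuousLinearMap.star_eq_adjoint, ContinuousLinearMap.adjoint_inner_left,
    ← inner_conj_symm]

lemma reOp_inner' (T : H →L[ℂ] H) (x : H) :
    (inner ℂ (reOp T x) x : ℂ) = ((inner ℂ (T x) x : ℂ).re : ℂ) := by
  simp only [reOp, ContinuousLinearMap.smul_apply, ContinuousLinearMap.add_apply,
    inner_smul_left, inner_add_left, star_apply_inner']
  set a : ℂ := inner ℂ (T x) x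
  have h1 : (starRingEnd ℂ) (2 : ℂ)⁻¹ = (2 : ℂ)⁻¹ := by
    rw [map_inv₀]; norm_num [Complex.ext_iff]
  rw [h1, Complex.re_eq_add_conj]
  ring

lemma imOp_inner' (T : H →L[ℂ] H) (x : H) :
    (inner ℂ (imOp T x) x : ℂ) = ((-(inner ℂ (T x) x : ℂ).im : ℝ) : ℂ) := by
  simp only [imOp, ContinuousLinearMap.smul_apply, ContinuousLinearMap.sub_apply,
    inner_smul_left, inner_sub_left, star_apply_inner']
  set a : ℂ := inner ℂ (T x) x
  have h1 : (starRingEnd ℂ) (2 * I)⁻¹ = -(2 * I)⁻¹ := by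
    rw [map_inv₀, map_mul, Complex.conj_I]
    norm_num [Complex.ext_iff]
  have h2 : a - (starRingEnd ℂ) a = 2 * I * a.im := by
    rw [Complex.im_eq_sub_conj]; field_simp
  rw [h1, h2]
  push_cast
  have h3 : (2 * I : ℂ) ≠ 0 := by simp [Complex.I_ne_zero]
  field_simp

lemma imOp_isSelfAdjoint' (T : H →L[ℂ] H) : IsSelfAdjoint (imOp T) := by
  rw [imOp, IsSelfAdjoint, star_smul, star_sub, star_star]
  rw [show star (2 * Complex.I)⁻¹ = -(2 * Complex.I)⁻¹ by simp [star_inv₀]]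
  rw [neg_smul, ← smul_neg, neg_sub]

lemma numRadius_bddAbove' (T : H →L[ℂ] H) :
    BddAbove {r : ℝ | ∃ x : H, ‖x‖ = 1 ∧ r = ‖(inner ℂ (T x) x : ℂ)‖} := by
  refine ⟨‖T‖, ?_⟩
  rintro r ⟨x, hx, rfl⟩
  calc ‖(inner ℂ (T x) x : ℂ)‖ ≤ ‖T x‖ * ‖x‖ := norm_inner_le_norm _ _
    _ ≤ ‖T‖ * ‖x‖ * ‖x‖ := by gcongr; exact T.le_opNorm x
    _ = ‖T‖ := by rw [hx]; ring

lemma le_numRadius' (T : H →L[ℂ] H) {x : H} (hx : ‖x‖ = 1) :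
    ‖(inner ℂ (T x) x : ℂ)‖ ≤ numRadius T :=
  le_csSup (numRadius_bddAbove' T) ⟨x, hx, rfl⟩

lemma numRadius_nonneg' (T : H →L[ℂ] H) : 0 ≤ numRadius T :=
  Real.sSup_nonneg (by rintro r ⟨x, hx, rfl⟩; positivity)

lemma inner_le_numRadius' (T : H →L[ℂ] H) (z : H) :
    ‖(inner ℂ (T z) z : ℂ)‖ ≤ numRadius T * ‖z‖ ^ 2 := by
  rcases eq_or_ne z 0 with rfl | hz
  · simp
  · have hn : ‖z‖ ≠ 0 := norm_ne_zero_iff.mpr hz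
    have h1 : ‖((‖z‖ : ℂ))⁻¹ • z‖ = 1 := by
      rw [norm_smul, norm_inv, Complex.norm_real, norm_norm, inv_mul_cancel₀ hn]
    have h := le_numRadius' T h1
    rw [map_smul, inner_smul_left, inner_smul_right, norm_mul, norm_mul,
      RCLike.norm_conj, norm_inv, Complex.norm_real, norm_norm] at h
    have h2 : 0 < ‖z‖ := lt_of_le_of_ne (norm_nonneg z) (Ne.symm hn)
    calc ‖(inner ℂ (T z) z : ℂ)‖
        = (‖z‖⁻¹ * (‖z‖⁻¹ * ‖(inner ℂ (T z) z : ℂ)‖)) * ‖z‖ ^ 2 := by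
          field_simp
      _ ≤ numRadius T * ‖z‖ ^ 2 := mul_le_mul_of_nonneg_right h (by positivity)

lemma selfadjoint_norm_le' (A : H →L[ℂ] H) (hA : IsSelfAdjoint A) :
    ‖A‖ ≤ numRadius A := by
  set M := numRadius A with hM
  have hM0 : 0 ≤ M := numRadius_nonneg' A
  have key : ∀ x y : H, ‖x‖ = 1 → ‖y‖ = 1 → ((inner ℂ (A x) y : ℂ)).re ≤ M := by
    intro x y hx hy
    have hsymm : ∀ u v : H, (inner ℂ (A u) v : ℂ) = inner ℂ u (A v) := hA.isSymmetric
    have expand : (inner ℂ (A (x + y)) (x + y) : ℂ) - inner ℂ (A (x - y)) (x - y)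
        = 2 * (inner ℂ (A x) y + inner ℂ (A y) x) := by
      simp only [map_add, map_sub, inner_add_left, inner_add_right,
        inner_sub_left, inner_sub_right]
      ring
    have hconj : (inner ℂ (A y) x : ℂ) = starRingEnd ℂ (inner ℂ (A x) y) := by
      rw [hsymm y x, ← inner_conj_symm]
    have hre : ((inner ℂ (A (x + y)) (x + y) : ℂ) - inner ℂ (A (x - y)) (x - y)).re
        = 4 * ((inner ℂ (A x) y : ℂ)).re := by
      rw [expand, hconj, Complex.add_conj]
      push_cast
      simp [Complex.mul_re]
      ring
    have b1 := inner_le_numRadius' A (x + y)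
    have b2 := inner_le_numRadius' A (x - y)
    have par : ‖x + y‖ ^ 2 + ‖x - y‖ ^ 2 = 4 := by
      have := parallelogram_law_with_norm ℂ x y
      rw [hx, hy] at this
      nlinarith [this]
    have hle : ((inner ℂ (A (x + y)) (x + y) : ℂ) - inner ℂ (A (x - y)) (x - y)).re
        ≤ M * ‖x + y‖ ^ 2 + M * ‖x - y‖ ^ 2 := by
      calc ((inner ℂ (A (x + y)) (x + y) : ℂ) - inner ℂ (A (x - y)) (x - y)).re
          ≤ ‖(inner ℂ (A (x + y)) (x + y) : ℂ)‖ + ‖(inner ℂ (A (x - y)) (x - y) : ℂ)‖ := by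
            rw [Complex.sub_re]
            have e1 : ((inner ℂ (A (x+y)) (x+y) : ℂ)).re ≤ ‖(inner ℂ (A (x+y)) (x+y) : ℂ)‖ :=
              Complex.re_le_norm _
            have e2 : -((inner ℂ (A (x-y)) (x-y) : ℂ)).re ≤ ‖(inner ℂ (A (x-y)) (x-y) : ℂ)‖ := by
              rw [← Complex.neg_re]
              calc (-(inner ℂ (A (x-y)) (x-y) : ℂ)).re ≤ ‖(-(inner ℂ (A (x-y)) (x-y) : ℂ))‖ :=
                Complex.re_le_norm _
                _ = _ := norm_neg _
            linarith
        _ ≤ M * ‖x + y‖ ^ 2 + M * ‖x - y‖ ^ 2 := by linarith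
    rw [hre] at hle
    nlinarith [hle, par]
  have key2 : ∀ x y : H, ‖x‖ = 1 → ‖y‖ = 1 → ‖(inner ℂ (A x) y : ℂ)‖ ≤ M := by
    intro x y hx hy
    set z : ℂ := inner ℂ (A x) y with hz
    rcases eq_or_ne z 0 with h0 | h0
    · rw [h0]; simpa using hM0
    · set c : ℂ := ‖z‖ / z with hc
      have hcn : ‖c‖ = 1 := by
        rw [hc, norm_div, Complex.norm_real, norm_norm, div_self (norm_ne_zero_iff.mpr h0)]
      have hy' : ‖c • y‖ = 1 := by rw [norm_smul, hcn, hy, one_mul]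
      have := key x (c • y) hx hy'
      rw [inner_smul_right] at this
      have hcz : c * z = (‖z‖ : ℂ) := by
        rw [hc]; field_simp
      rw [hcz] at this
      simpa using this
  have key3 : ∀ x : H, ‖x‖ = 1 → ‖A x‖ ≤ M := by
    intro x hx
    rcases eq_or_ne (A x) 0 with h0 | h0
    · rw [h0, norm_zero]; exact hM0
    · have hn : ‖A x‖ ≠ 0 := norm_ne_zero_iff.mpr h0
      have hy : ‖((‖A x‖ : ℂ))⁻¹ • A x‖ = 1 := by
        rw [norm_smul, norm_inv, Complex.norm_real, norm_norm, inv_mul_cancel₀ hn]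
      have := key2 x _ hx hy
      rw [inner_smul_right, inner_self_eq_norm_sq_to_K, norm_mul, norm_inv] at this
      simp only [norm_pow, Complex.norm_real, RCLike.norm_ofReal, abs_norm, norm_norm] at this
      have h2 : 0 < ‖A x‖ := lt_of_le_of_ne (norm_nonneg _) (Ne.symm hn)
      calc ‖A x‖ = ‖A x‖⁻¹ * ‖A x‖ ^ 2 := by field_simp
        _ ≤ M := this
  refine A.opNorm_le_bound hM0 ?_
  intro x
  rcases eq_or_ne x 0 with rfl | hx0
  · simp
  · have hn : ‖x‖ ≠ 0 := norm_ne_zero_iff.mpr hx0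
    have h1 : ‖((‖x‖ : ℂ))⁻¹ • x‖ = 1 := by
      rw [norm_smul, norm_inv, Complex.norm_real, norm_norm, inv_mul_cancel₀ hn]
    have := key3 _ h1
    rw [map_smul, norm_smul, norm_inv, Complex.norm_real, norm_norm] at this
    have h2 : 0 < ‖x‖ := lt_of_le_of_ne (norm_nonneg x) (Ne.symm hn)
    calc ‖A x‖ = (‖x‖⁻¹ * ‖A x‖) * ‖x‖ := by field_simp
      _ ≤ M * ‖x‖ := mul_le_mul_of_nonneg_right this (norm_nonneg x)

theorem stmt11 (T : H →L[ℂ] H) :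
    numRadius T ≥ Real.sqrt (‖imOp T‖ ^ 2 + crawford (reOp T) ^ 2) := by
  by_cases hne : ∃ x : H, ‖x‖ = 1
  · obtain ⟨u, hu⟩ := hne
    set w := numRadius T with hw
    set c := crawford (reOp T) with hc
    have hw0 : 0 ≤ w := numRadius_nonneg' T
    have hc0 : 0 ≤ c := Real.sInf_nonneg (by rintro r ⟨x, hx, rfl⟩; positivity)
    have hcle : ∀ x : H, ‖x‖ = 1 → c ≤ |(inner ℂ (T x) x : ℂ).re| := by
      intro x hx
      have hmem : ‖(inner ℂ (reOp T x) x : ℂ)‖ ∈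
          {r : ℝ | ∃ y : H, ‖y‖ = 1 ∧ r = ‖(inner ℂ (reOp T y) y : ℂ)‖} := ⟨x, hx, rfl⟩
      have := csInf_le ⟨0, by rintro r ⟨y, hy, rfl⟩; positivity⟩ hmem
      rwa [reOp_inner', Complex.norm_real, Real.norm_eq_abs] at this
    -- basic decomposition facts for unit x
    have himle : ∀ x : H, ‖x‖ = 1 →
        |(inner ℂ (T x) x : ℂ).im| ^ 2 ≤ w ^ 2 - c ^ 2 := by
      intro x hx
      set a : ℂ := inner ℂ (T x) x with ha
      have hna : ‖a‖ ≤ w := le_numRadius' T hx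
      have hsq : ‖a‖ ^ 2 = a.re ^ 2 + a.im ^ 2 := by
        rw [Complex.sq_norm, Complex.normSq_apply]; ring
      have h1 : c ≤ |a.re| := hcle x hx
      have h2 : c ^ 2 ≤ a.re ^ 2 := by
        rw [← _root_.sq_abs a.re]; exact pow_le_pow_left₀ hc0 h1 2
      nlinarith [norm_nonneg a, _root_.sq_abs a.im]
    have hcw : c ≤ w := by
      calc c ≤ |(inner ℂ (T u) u : ℂ).re| := hcle u hu
        _ ≤ ‖(inner ℂ (T u) u : ℂ)‖ := Complex.abs_re_le_norm _
        _ ≤ w := le_numRadius' T hu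
    have hwc : 0 ≤ w ^ 2 - c ^ 2 := by nlinarith
    set B := Real.sqrt (w ^ 2 - c ^ 2) with hB
    have hnormIm : ‖imOp T‖ ≤ B := by
      refine le_trans (selfadjoint_norm_le' _ (imOp_isSelfAdjoint' T)) ?_
      refine csSup_le ⟨‖(inner ℂ (imOp T u) u : ℂ)‖, u, hu, rfl⟩ ?_
      rintro r ⟨x, hx, rfl⟩
      rw [imOp_inner', Complex.norm_real, Real.norm_eq_abs, abs_neg]
      have := himle x hx
      rw [hB]
      rw [show |(inner ℂ (T x) x : ℂ).im| = Real.sqrt (|(inner ℂ (T x) x : ℂ).im| ^ 2) by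
        rw [Real.sqrt_sq (abs_nonneg _)]]
      exact Real.sqrt_le_sqrt this
    have hsum : ‖imOp T‖ ^ 2 + c ^ 2 ≤ w ^ 2 := by
      have hB2 : B ^ 2 = w ^ 2 - c ^ 2 := Real.sq_sqrt hwc
      nlinarith [norm_nonneg (imOp T), Real.sqrt_nonneg (w ^ 2 - c ^ 2)]
    calc Real.sqrt (‖imOp T‖ ^ 2 + c ^ 2) ≤ Real.sqrt (w ^ 2) := Real.sqrt_le_sqrt hsum
      _ = w := Real.sqrt_sq hw0
  · push_neg at hne
    have hzero : ∀ x : H, x = 0 := by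
      intro x
      by_contra h
      exact hne (((‖x‖ : ℂ))⁻¹ • x) (by
        rw [norm_smul, norm_inv, Complex.norm_real, norm_norm,
          inv_mul_cancel₀ (norm_ne_zero_iff.mpr h)])
    have hIm : imOp T = 0 := by
      ext x
      rw [hzero x]
      simp
    have hset : {r : ℝ | ∃ x : H, ‖x‖ = 1 ∧ r = ‖(inner ℂ (reOp T x) x : ℂ)‖} = ∅ := by
      ext r
      simp only [Set.mem_setOf_eq, Set.mem_empty_iff_false, iff_false]
      rintro ⟨x, hx, -⟩
      exact hne x hx
    have hset2 : {r : ℝ | ∃ x : H, ‖x‖ = 1 ∧ r = ‖(inner ℂ (T x) x : ℂ)‖} = ∅ := by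
      ext r
      simp only [Set.mem_setOf_eq, Set.mem_empty_iff_false, iff_false]
      rintro ⟨x, hx, -⟩
      exact hne x hx
    rw [crawford, hset, Real.sInf_empty, numRadius, hset2, Real.sSup_empty, hIm]
    norm_num
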